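/- If K ≥ 1, S > 0, T > 0, then with Ψ = ((K-1)T + S)/((K+S)(KT+S) - T) and Θ = (K+S-1)/((K+S)(KT+S) - T), the point (SΨ, SΘ, Ψ, TΘ) is an equilibrium of the system with all four coordinates strictly positive. -/

import Mathlib

/-- The vector field of the nondimensional plant-soil feedback model. -/
def F (K S T : ℝ) (x : Fin 4 → ℝ) : Fin 4 → ℝ :=
  ![x 0 * (1 - x 1 - x 2 - K * x 3),
    x 1 * (1 - x 0 - x 3 - K * x 2),
    x 0 - S * x 2,
    T * x 1 - S * x 3]

theorem coexistence_equilibrium_K_ge_one (K S T : ℝ) (hK : 1 ≤ K) (hS : 0 < S) (hT : 0 < T) :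
    let Ψ : ℝ := ((K - 1) * T + S) / ((K + S) * (K * T + S) - T)
    let Θ : ℝ := (K + S - 1) / ((K + S) * (K * T + S) - T)
    F K S T ![S * Ψ, S * Θ, Ψ, T * Θ] = 0 ∧
    0 < S * Ψ ∧ 0 < S * Θ ∧ 0 < Ψ ∧ 0 < T * Θ := by
  intro Ψ Θ
  have hK0 : (0:ℝ) < K := lt_of_lt_of_le one_pos hK
  have hD : 0 < (K + S) * (K * T + S) - T := by
    nlinarith [mul_nonneg (mul_nonneg (sub_nonneg.2 hK) (by linarith : (0:ℝ) ≤ K + 1)) hT.le,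
      mul_pos hK0 hS, mul_pos hS hS, mul_pos (mul_pos hK0 hS) hT]
  have hD' : (K + S) * (K * T + S) - T ≠ 0 := ne_of_gt hD
  have hΨ : 0 < Ψ := by
    apply div_pos _ hD; nlinarith
  have hΘ : 0 < Θ := by
    apply div_pos _ hD; nlinarith
  refine ⟨?_, mul_pos hS hΨ, mul_pos hS hΘ, hΨ, mul_pos hT hΘ⟩
  funext i
  fin_cases i <;>
    simp only [F, Ψ, Θ, Matrix.cons_val_zero, Matrix.cons_val_one, Matrix.head_cons,
      Matrix.cons_val_two, Matrix.tail_cons, Matrix.cons_val_three, Pi.zero_apply,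
      Matrix.cons_val', Matrix.empty_val', Matrix.cons_val_fin_one, Fin.isValue, Fin.zero_eta, Fin.mk_one, Fin.reduceFinMk] <;>
    field_simp <;> ring
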